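/- Let A = A(r,R) with 0 < r < R and let z₁, z₂ ∈ A with |z₂| ≤ |z₁|. Then the hyperbolic distance satisfies d_A(z₁,z₂) ≥ max{ (π/mod(A)) · log(|z₁|/|z₂|), log( log(R/|z₂|) / log(R/|z₁|) ) }, where mod(A) = log(R/r). -/

import Mathlib

open Real Complex

/-- The round annulus `A(r,R) = {z : r < |z| < R}`. -/
def annulus (r R : ℝ) : Set ℂ := {z : ℂ | r < ‖z‖ ∧ ‖z‖ < R}

/-- The hyperbolic density (curvature `−1`) of the annulus `A(r,R)`. -/
noncomputable def annulusHypDensity (r R : ℝ) (z : ℂ) : ℝ :=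
  π / (‖z‖ * Real.log (R / r) *
    Real.sin (π * Real.log (R / ‖z‖) / Real.log (R / r)))

/-- The hyperbolic distance on the annulus `A(r,R)`: the infimum of the hyperbolic
lengths `∫ λ_A(γ(t)) |γ'(t)| dt` over piecewise smooth (here: `C¹`) paths `γ` in
the annulus joining `z₁` to `z₂`. -/
noncomputable def annulusHypDist (r R : ℝ) (z₁ z₂ : ℂ) : ℝ :=
  sInf { L : ℝ | ∃ γ : ℝ → ℂ, γ 0 = z₁ ∧ γ 1 = z₂ ∧
    (∀ t ∈ Set.Icc (0:ℝ) 1, γ t ∈ annulus r R) ∧ ContDiffOn ℝ 1 γ (Set.Icc (0:ℝ) 1) ∧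
    L = ∫ t in (0:ℝ)..1, annulusHypDensity r R (γ t) * ‖deriv γ t‖ }

namespace AnnulusAux

lemma mod_pos {r R : ℝ} (hr : 0 < r) (hrR : r < R) : 0 < Real.log (R / r) :=
  Real.log_pos ((one_lt_div hr).2 hrR)

lemma abs_pos_of_mem {r R : ℝ} (hr : 0 < r) {z : ℂ} (hz : z ∈ annulus r R) :
    0 < ‖z‖ := lt_trans hr hz.1

lemma logRz_pos {r R : ℝ} (hr : 0 < r) {z : ℂ} (hz : z ∈ annulus r R) :
    0 < Real.log (R / ‖z‖) :=
  Real.log_pos ((one_lt_div (abs_pos_of_mem hr hz)).2 hz.2)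

lemma logRz_lt {r R : ℝ} (hr : 0 < r) (hrR : r < R) {z : ℂ} (hz : z ∈ annulus r R) :
    Real.log (R / ‖z‖) < Real.log (R / r) := by
  have hR : 0 < R := hr.trans hrR
  have h1 : R / ‖z‖ < R / r := div_lt_div_of_pos_left hR hr hz.1
  exact Real.log_lt_log (div_pos hR (abs_pos_of_mem hr hz)) h1

lemma sin_arg_pos {r R : ℝ} (hr : 0 < r) (hrR : r < R) {z : ℂ} (hz : z ∈ annulus r R) :
    0 < Real.sin (π * Real.log (R / ‖z‖) / Real.log (R / r)) := by
  have hM := mod_pos hr hrR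
  have hx := logRz_pos hr hz
  have hxM := logRz_lt hr hrR hz
  apply Real.sin_pos_of_pos_of_lt_pi
  · positivity
  · rw [div_lt_iff₀ hM]
    have := Real.pi_pos
    nlinarith

lemma denom_pos {r R : ℝ} (hr : 0 < r) (hrR : r < R) {z : ℂ} (hz : z ∈ annulus r R) :
    0 < ‖z‖ * Real.log (R / r) *
      Real.sin (π * Real.log (R / ‖z‖) / Real.log (R / r)) :=
  mul_pos (mul_pos (abs_pos_of_mem hr hz) (mod_pos hr hrR)) (sin_arg_pos hr hrR hz)

lemma density_pos {r R : ℝ} (hr : 0 < r) (hrR : r < R) {z : ℂ} (hz : z ∈ annulus r R) :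
    0 < annulusHypDensity r R z :=
  div_pos Real.pi_pos (denom_pos hr hrR hz)

/-- First lower bound: `λ(z) ≥ π / (|z| · mod)`. -/
lemma density_ge_one {r R : ℝ} (hr : 0 < r) (hrR : r < R) {z : ℂ} (hz : z ∈ annulus r R) :
    π / (‖z‖ * Real.log (R / r)) ≤ annulusHypDensity r R z := by
  have h1 := denom_pos hr hrR hz
  have hsin : Real.sin (π * Real.log (R / ‖z‖) / Real.log (R / r)) ≤ 1 :=
    Real.sin_le_one _
  have h2 : ‖z‖ * Real.log (R / r) *
      Real.sin (π * Real.log (R / ‖z‖) / Real.log (R / r)) ≤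
      ‖z‖ * Real.log (R / r) := by
    nlinarith [mul_nonneg (mul_pos (abs_pos_of_mem hr hz) (mod_pos hr hrR)).le
      (sub_nonneg.2 hsin)]
  exact div_le_div_of_nonneg_left Real.pi_pos.le h1 h2

/-- Second lower bound: `λ(z) ≥ 1 / (|z| · log(R/|z|))`. -/
lemma density_ge_two {r R : ℝ} (hr : 0 < r) (hrR : r < R) {z : ℂ} (hz : z ∈ annulus r R) :
    1 / (‖z‖ * Real.log (R / ‖z‖)) ≤ annulusHypDensity r R z := by
  have hM := mod_pos hr hrR
  have hx := logRz_pos hr hz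
  have ha := abs_pos_of_mem hr hz
  have h1 := denom_pos hr hrR hz
  have hs : Real.sin (π * Real.log (R / ‖z‖) / Real.log (R / r)) ≤
      π * Real.log (R / ‖z‖) / Real.log (R / r) :=
    Real.sin_le (by positivity)
  have h2 : ‖z‖ * Real.log (R / r) *
      Real.sin (π * Real.log (R / ‖z‖) / Real.log (R / r)) ≤
      π * (‖z‖ * Real.log (R / ‖z‖)) := by
    have h3 : ‖z‖ * Real.log (R / r) *
        (π * Real.log (R / ‖z‖) / Real.log (R / r)) =
        π * (‖z‖ * Real.log (R / ‖z‖)) := by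
      field_simp
    have h2' := mul_le_mul_of_nonneg_left hs (mul_pos ha hM).le
    linarith [h3 ▸ h2']
  have h4 : π / (π * (‖z‖ * Real.log (R / ‖z‖))) ≤
      annulusHypDensity r R z :=
    div_le_div_of_nonneg_left Real.pi_pos.le h1 h2
  have h5 : π / (π * (‖z‖ * Real.log (R / ‖z‖))) =
      1 / (‖z‖ * Real.log (R / ‖z‖)) := by
    rw [div_mul_cancel_left₀ (ne_of_gt Real.pi_pos), one_div]
  rw [← h5]; exact h4

/-- Core estimate: for any admissible path `γ`, and any potential `F` of the
logarithm of the modulus whose derivative is bounded by `|z| λ(z)`, the hyperbolic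
length of `γ` is at least the change of the potential. -/
lemma core (r R : ℝ) (hr : 0 < r) (hrR : r < R)
    (γ : ℝ → ℂ)
    (hmem : ∀ t ∈ Set.Icc (0:ℝ) 1, γ t ∈ annulus r R)
    (hC : ContDiffOn ℝ 1 γ (Set.Icc (0:ℝ) 1))
    (F F' : ℝ → ℝ)
    (hF : ∀ x ∈ Set.Ioo (Real.log r) (Real.log R), HasDerivAt F (F' x) x)
    (hF'c : ContinuousOn F' (Set.Ioo (Real.log r) (Real.log R)))
    (hbound : ∀ z ∈ annulus r R,
      |F' (Real.log (‖z‖))| ≤ ‖z‖ * annulusHypDensity r R z) :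
    F (Real.log (‖γ 1‖)) - F (Real.log (‖γ 0‖)) ≤
      ∫ t in (0:ℝ)..1, annulusHypDensity r R (γ t) * ‖deriv γ t‖ := by
  have hR : 0 < R := hr.trans hrR
  set g : ℝ → ℂ := fun t => derivWithin γ (Set.Icc (0:ℝ) 1) t with hg
  have hγc : ContinuousOn γ (Set.Icc (0:ℝ) 1) := hC.continuousOn
  have hgc : ContinuousOn g (Set.Icc (0:ℝ) 1) :=
    hC.continuousOn_derivWithin (uniqueDiffOn_Icc one_pos) le_rfl
  have hapos : ∀ t ∈ Set.Icc (0:ℝ) 1, 0 < ‖γ t‖ :=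
    fun t ht => abs_pos_of_mem hr (hmem t ht)
  have hnsq_pos : ∀ t ∈ Set.Icc (0:ℝ) 1, 0 < Complex.normSq (γ t) := by
    intro t ht
    rw [Complex.normSq_eq_norm_sq]
    exact pow_pos (hapos t ht) 2
  -- u t = log |γ t|
  have hu_eq : ∀ t, Real.log (Complex.normSq (γ t)) / 2 = Real.log (‖γ t‖) := by
    intro t
    rw [Complex.norm_def, Real.log_sqrt (Complex.normSq_nonneg _)]
  have hu_mem : ∀ t ∈ Set.Icc (0:ℝ) 1,
      Real.log (Complex.normSq (γ t)) / 2 ∈ Set.Ioo (Real.log r) (Real.log R) := by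
    intro t ht
    rw [hu_eq]
    exact ⟨Real.log_lt_log hr (hmem t ht).1, Real.log_lt_log (hapos t ht) (hmem t ht).2⟩
  have hu_cont : ContinuousOn (fun t => Real.log (Complex.normSq (γ t)) / 2)
      (Set.Icc (0:ℝ) 1) := by
    apply ContinuousOn.div_const
    apply Real.continuousOn_log.comp (Complex.continuous_normSq.comp_continuousOn hγc)
    intro t ht
    exact ne_of_gt (hnsq_pos t ht)
  -- derivative of γ at interior points
  have hderiv : ∀ t ∈ Set.Ioo (0:ℝ) 1, HasDerivAt γ (g t) t := by
    intro t ht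
    have hIc : Set.Icc (0:ℝ) 1 ∈ nhds t := Icc_mem_nhds ht.1 ht.2
    have hd : DifferentiableWithinAt ℝ γ (Set.Icc (0:ℝ) 1) t :=
      (hC.differentiableOn one_ne_zero) t (Set.mem_Icc_of_Ioo ht)
    have hd' : DifferentiableAt ℝ γ t := hd.differentiableAt hIc
    have heq : derivWithin γ (Set.Icc (0:ℝ) 1) t = deriv γ t := derivWithin_of_mem_nhds hIc
    rw [hg]
    simpa [heq] using hd'.hasDerivAt
  -- derivative of u
  set uD : ℝ → ℝ :=
    fun t => ((γ t).re * (g t).re + (γ t).im * (g t).im) / Complex.normSq (γ t) with huD_def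
  have huD : ∀ t ∈ Set.Ioo (0:ℝ) 1,
      HasDerivAt (fun s => Real.log (Complex.normSq (γ s)) / 2) (uD t) t := by
    intro t ht
    have ht' : t ∈ Set.Icc (0:ℝ) 1 := Set.mem_Icc_of_Ioo ht
    have hγt := hderiv t ht
    have hre : HasDerivAt (fun s => (γ s).re) ((g t).re) t := by
      exact Complex.reCLM.hasFDerivAt.comp_hasDerivAt t hγt
    have him : HasDerivAt (fun s => (γ s).im) ((g t).im) t := by
      exact Complex.imCLM.hasFDerivAt.comp_hasDerivAt t hγt
    have hN : HasDerivAt (fun s => Complex.normSq (γ s))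
        ((g t).re * (γ t).re + (γ t).re * (g t).re +
          ((g t).im * (γ t).im + (γ t).im * (g t).im)) t := by
      have := (hre.mul hre).add (him.mul him)
      simp only [Complex.normSq_apply]; exact this
    have hlog := (hN.log (ne_of_gt (hnsq_pos t ht'))).div_const 2
    refine HasDerivAt.congr_deriv hlog (Eq.symm ?_)
    rw [huD_def]
    have := ne_of_gt (hnsq_pos t ht')
    field_simp
    ring
  have huD_cont : ContinuousOn uD (Set.Icc (0:ℝ) 1) := by
    apply ContinuousOn.div
    · exact ((Complex.continuous_re.comp_continuousOn hγc).mul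
        (Complex.continuous_re.comp_continuousOn hgc)).add
        ((Complex.continuous_im.comp_continuousOn hγc).mul
        (Complex.continuous_im.comp_continuousOn hgc))
    · exact Complex.continuous_normSq.comp_continuousOn hγc
    · exact fun t ht => ne_of_gt (hnsq_pos t ht)
  have huD_le : ∀ t ∈ Set.Icc (0:ℝ) 1,
      |uD t| ≤ ‖g t‖ / ‖γ t‖ := by
    intro t ht
    have h0 : ((starRingEnd ℂ) (γ t) * g t).re =
        (γ t).re * (g t).re + (γ t).im * (g t).im := by
      simp [Complex.mul_re]
    have h2 : ‖(starRingEnd ℂ) (γ t) * g t‖ =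
        ‖γ t‖ * ‖g t‖ := by
      rw [norm_mul, Complex.norm_conj]
    have h1 : |(γ t).re * (g t).re + (γ t).im * (g t).im| ≤
        ‖γ t‖ * ‖g t‖ := by
      rw [← h0, ← h2]; exact Complex.abs_re_le_norm _
    have ha := hapos t ht
    have hnsq := hnsq_pos t ht
    rw [huD_def]
    rw [abs_div, abs_of_pos hnsq, div_le_div_iff₀ hnsq ha,
      Complex.normSq_eq_norm_sq]
    nlinarith [mul_le_mul_of_nonneg_right h1 ha.le, norm_nonneg (g t)]
  -- the comparison integrand
  set φ : ℝ → ℝ := fun t => annulusHypDensity r R (γ t) * ‖g t‖ with hφ_def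
  have hφc : ContinuousOn φ (Set.Icc (0:ℝ) 1) := by
    apply ContinuousOn.mul
    · apply ContinuousOn.div continuousOn_const
      · apply ContinuousOn.mul
        · exact (continuous_norm.comp_continuousOn hγc).mul continuousOn_const
        · apply Real.continuous_sin.comp_continuousOn
          apply ContinuousOn.div_const
          apply ContinuousOn.mul continuousOn_const
          apply Real.continuousOn_log.comp
            (continuousOn_const.div (continuous_norm.comp_continuousOn hγc)
              (fun t ht => ne_of_gt (hapos t ht)))
          intro t ht
          have : (0:ℝ) < R / ‖γ t‖ := div_pos hR (hapos t ht)
          exact ne_of_gt this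
      · exact fun t ht => ne_of_gt (denom_pos hr hrR (hmem t ht))
    · exact hgc.norm
  have hIcc : Set.uIcc (0:ℝ) 1 = Set.Icc (0:ℝ) 1 := Set.uIcc_of_le zero_le_one
  have hφint : IntervalIntegrable φ MeasureTheory.volume 0 1 := by
    apply ContinuousOn.intervalIntegrable
    rwa [hIcc]
  -- w' = F'(u) * uD
  set w' : ℝ → ℝ := fun t => F' (Real.log (Complex.normSq (γ t)) / 2) * uD t with hw'_def
  have hw'c : ContinuousOn w' (Set.Icc (0:ℝ) 1) := by
    apply ContinuousOn.mul _ huD_cont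
    exact hF'c.comp hu_cont hu_mem
  have hw'int : IntervalIntegrable w' MeasureTheory.volume 0 1 := by
    apply ContinuousOn.intervalIntegrable
    rwa [hIcc]
  have hwc : ContinuousOn (fun t => F (Real.log (Complex.normSq (γ t)) / 2))
      (Set.Icc (0:ℝ) 1) := by
    have hFc : ContinuousOn F (Set.Ioo (Real.log r) (Real.log R)) :=
      fun x hx => (hF x hx).continuousAt.continuousWithinAt
    exact hFc.comp hu_cont hu_mem
  have hwd : ∀ t ∈ Set.Ioo (0:ℝ) 1,
      HasDerivAt (fun s => F (Real.log (Complex.normSq (γ s)) / 2)) (w' t) t := by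
    intro t ht
    exact (hF _ (hu_mem t (Set.mem_Icc_of_Ioo ht))).comp t (huD t ht)
  have hFTC : ∫ t in (0:ℝ)..1, w' t =
      F (Real.log (Complex.normSq (γ 1)) / 2) - F (Real.log (Complex.normSq (γ 0)) / 2) :=
    intervalIntegral.integral_eq_sub_of_hasDerivAt_of_le zero_le_one hwc hwd hw'int
  -- pointwise comparison a.e.
  have hmono : ∫ t in (0:ℝ)..1, w' t ≤ ∫ t in (0:ℝ)..1, φ t := by
    apply intervalIntegral.integral_mono_ae_restrict zero_le_one hw'int hφint
    have hres : MeasureTheory.volume.restrict (Set.Icc (0:ℝ) 1) =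
        MeasureTheory.volume.restrict (Set.Ioo (0:ℝ) 1) :=
      (MeasureTheory.Measure.restrict_congr_set MeasureTheory.Ioo_ae_eq_Icc).symm
    rw [Filter.EventuallyLE, hres]
    filter_upwards [MeasureTheory.ae_restrict_mem measurableSet_Ioo] with t ht
    have ht' : t ∈ Set.Icc (0:ℝ) 1 := Set.mem_Icc_of_Ioo ht
    have hb := hbound (γ t) (hmem t ht')
    have ha := hapos t ht'
    have hd := density_pos hr hrR (hmem t ht')
    calc w' t ≤ |w' t| := le_abs_self _
      _ = |F' (Real.log (Complex.normSq (γ t)) / 2)| * |uD t| := abs_mul _ _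
      _ ≤ (‖γ t‖ * annulusHypDensity r R (γ t)) *
          (‖g t‖ / ‖γ t‖) := by
          apply mul_le_mul _ (huD_le t ht') (abs_nonneg _) (by positivity)
          rw [hu_eq]; exact hb
      _ = φ t := by
          rw [hφ_def]
          field_simp
  -- replace deriv by derivWithin in the integral
  have hcongr : ∫ t in (0:ℝ)..1, annulusHypDensity r R (γ t) * ‖deriv γ t‖ =
      ∫ t in (0:ℝ)..1, φ t := by
    apply intervalIntegral.integral_congr_ae
    have h1 : ∀ᵐ t : ℝ ∂MeasureTheory.volume, t ≠ 1 := by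
      rw [MeasureTheory.ae_iff]
      have : {t : ℝ | ¬ t ≠ 1} = {1} := by ext t; simp
      rw [this]
      exact MeasureTheory.measure_singleton 1
    filter_upwards [h1] with t ht htI
    rw [Set.uIoc_of_le zero_le_one] at htI
    have htIoo : t ∈ Set.Ioo (0:ℝ) 1 := ⟨htI.1, lt_of_le_of_ne htI.2 ht⟩
    have heq : derivWithin γ (Set.Icc (0:ℝ) 1) t = deriv γ t :=
      derivWithin_of_mem_nhds (Icc_mem_nhds htIoo.1 htIoo.2)
    simp only [hφ_def, hg]
    rw [heq]
  rw [hcongr, ← hu_eq 1, ← hu_eq 0, ← hFTC]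
  exact hmono

end AnnulusAux

/-- Lower bound for the hyperbolic distance in an annulus: for `0 < r < R`,
`z₁, z₂ ∈ A(r,R)` with `|z₂| ≤ |z₁|`,
`d_A(z₁,z₂) ≥ max ((π / mod A) log (|z₁|/|z₂|)) (log (log (R/|z₂|) / log (R/|z₁|)))`,
where `mod A = log (R/r)`. -/
theorem annulusHypDist_lower_bound (r R : ℝ) (hr : 0 < r) (hrR : r < R)
    (z₁ z₂ : ℂ) (hz₁ : z₁ ∈ annulus r R) (hz₂ : z₂ ∈ annulus r R)
    (habs : ‖z₂‖ ≤ ‖z₁‖) :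
    annulusHypDist r R z₁ z₂ ≥
      max (π / Real.log (R / r) * Real.log (‖z₁‖ / ‖z₂‖))
        (Real.log (Real.log (R / ‖z₂‖) / Real.log (R / ‖z₁‖))) := by
  have hR : 0 < R := hr.trans hrR
  have hM := AnnulusAux.mod_pos hr hrR
  have ha := AnnulusAux.abs_pos_of_mem hr hz₁
  have hb := AnnulusAux.abs_pos_of_mem hr hz₂
  -- the set of lengths is nonempty: explicit polar path
  have hne : Set.Nonempty { L : ℝ | ∃ γ : ℝ → ℂ, γ 0 = z₁ ∧ γ 1 = z₂ ∧
      (∀ t ∈ Set.Icc (0:ℝ) 1, γ t ∈ annulus r R) ∧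
      ContDiffOn ℝ 1 γ (Set.Icc (0:ℝ) 1) ∧
      L = ∫ t in (0:ℝ)..1, annulusHypDensity r R (γ t) * ‖deriv γ t‖ } := by
    set a := ‖z₁‖ with ha_def
    set b := ‖z₂‖ with hb_def
    set γp : ℝ → ℂ := fun t =>
      (((1 - t) * a + t * b : ℝ) : ℂ) *
        Complex.exp ((((1 - t) * Complex.arg z₁ + t * Complex.arg z₂ : ℝ) : ℂ) * Complex.I)
      with hγp
    refine ⟨_, γp, ?_, ?_, ?_, ?_, rfl⟩
    · rw [hγp]
      simp only [sub_zero, one_mul, zero_mul, add_zero, mul_zero]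
      exact Complex.norm_mul_exp_arg_mul_I z₁
    · rw [hγp]
      simp only [sub_self, zero_mul, one_mul, zero_add, mul_one]
      exact Complex.norm_mul_exp_arg_mul_I z₂
    · intro t ht
      have hm1 : b ≤ (1 - t) * a + t * b := by nlinarith [ht.1, ht.2]
      have hm2 : (1 - t) * a + t * b ≤ a := by nlinarith [ht.1, ht.2]
      have hmpos : 0 < (1 - t) * a + t * b := lt_of_lt_of_le hb hm1
      have habs' : ‖γp t‖ = (1 - t) * a + t * b := by
        rw [hγp]
        simp only []
        rw [norm_mul, Complex.norm_real, Real.norm_eq_abs, Complex.norm_exp_ofReal_mul_I, mul_one,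
          abs_of_pos hmpos]
      constructor
      · rw [habs']; exact lt_of_lt_of_le hz₂.1 hm1
      · rw [habs']; exact lt_of_le_of_lt hm2 hz₁.2
    · apply ContDiff.contDiffOn
      apply ContDiff.mul
      · exact Complex.ofRealCLM.contDiff.comp
          (((contDiff_const.sub contDiff_id).mul contDiff_const).add
            (contDiff_id.mul contDiff_const))
      · exact Complex.contDiff_exp.comp
          ((Complex.ofRealCLM.contDiff.comp
            (((contDiff_const.sub contDiff_id).mul contDiff_const).add
              (contDiff_id.mul contDiff_const))).mul contDiff_const)
  rw [ge_iff_le, annulusHypDist]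
  apply le_csInf hne
  rintro L ⟨γ, h0, h1, hmemγ, hCγ, rfl⟩
  apply max_le
  · -- first bound
    have hcore := AnnulusAux.core r R hr hrR γ hmemγ hCγ
      (fun x => -(π / Real.log (R / r)) * x) (fun _ => -(π / Real.log (R / r)))
      (fun x _ => by simpa using (hasDerivAt_id x).const_mul (-(π / Real.log (R / r))))
      continuousOn_const ?_
    · rw [h0, h1] at hcore
      have hlog : Real.log (‖z₁‖ / ‖z₂‖) =
          Real.log (‖z₁‖) - Real.log (‖z₂‖) :=
        Real.log_div (ne_of_gt ha) (ne_of_gt hb)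
      rw [hlog]
      calc π / Real.log (R / r) * (Real.log (‖z₁‖) - Real.log (‖z₂‖))
          = -(π / Real.log (R / r)) * Real.log (‖z₂‖) -
            -(π / Real.log (R / r)) * Real.log (‖z₁‖) := by ring
        _ ≤ _ := hcore
    · intro z hz
      have hd := AnnulusAux.density_ge_one hr hrR hz
      have haz := AnnulusAux.abs_pos_of_mem hr hz
      rw [abs_neg, abs_of_pos (div_pos Real.pi_pos hM)]
      calc π / Real.log (R / r) = ‖z‖ * (π / (‖z‖ * Real.log (R / r))) := by
            field_simp
        _ ≤ ‖z‖ * annulusHypDensity r R z := by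
            exact mul_le_mul_of_nonneg_left hd haz.le
  · -- second bound
    have hlogRa := AnnulusAux.logRz_pos hr hz₁
    have hlogRb := AnnulusAux.logRz_pos hr hz₂
    have hkey : ∀ x ∈ Set.Ioo (Real.log r) (Real.log R), 0 < Real.log R - x := by
      intro x hx; linarith [hx.2]
    have hcore := AnnulusAux.core r R hr hrR γ hmemγ hCγ
      (fun x => Real.log (Real.log R - x)) (fun x => -(1 / (Real.log R - x)))
      ?_ ?_ ?_
    · rw [h0, h1] at hcore
      have e1 : Real.log R - Real.log (‖z₁‖) = Real.log (R / ‖z₁‖) :=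
        (Real.log_div (ne_of_gt hR) (ne_of_gt ha)).symm
      have e2 : Real.log R - Real.log (‖z₂‖) = Real.log (R / ‖z₂‖) :=
        (Real.log_div (ne_of_gt hR) (ne_of_gt hb)).symm
      rw [Real.log_div (ne_of_gt hlogRb) (ne_of_gt hlogRa)]
      simpa [e1, e2] using hcore
    · intro x hx
      have h1' : HasDerivAt (fun x : ℝ => Real.log R - x) (-1) x := by
        simpa using (hasDerivAt_id x).const_sub (Real.log R)
      have := h1'.log (ne_of_gt (hkey x hx))
      simpa [neg_div] using this
    · apply ContinuousOn.neg
      apply ContinuousOn.div continuousOn_const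
      · exact continuousOn_const.sub continuousOn_id
      · intro x hx; exact ne_of_gt (hkey x hx)
    · intro z hz
      have hd := AnnulusAux.density_ge_two hr hrR hz
      have haz := AnnulusAux.abs_pos_of_mem hr hz
      have hlz := AnnulusAux.logRz_pos hr hz
      have e3 : Real.log R - Real.log (‖z‖) = Real.log (R / ‖z‖) :=
        (Real.log_div (ne_of_gt hR) (ne_of_gt haz)).symm
      show |(-(1 / (Real.log R - Real.log (‖z‖))))| ≤ _
      rw [e3, abs_neg, abs_of_pos (div_pos one_pos hlz)]
      calc 1 / Real.log (R / ‖z‖)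
          = ‖z‖ * (1 / (‖z‖ * Real.log (R / ‖z‖))) := by
            field_simp
        _ ≤ ‖z‖ * annulusHypDensity r R z :=
            mul_le_mul_of_nonneg_left hd haz.le
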